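/- arXiv:2111.06320 — 2 statements merged into one kernel-verified Lean document; each statement's English description precedes it below -/
import Mathlib

section
/- Let d ≥ 1 and let K be the free Schrödinger kernel. Then the family {K(t,·)}_{t>0} is an approximate identity at the origin: for every Schwartz function f : ℝ^d → ℂ, the (absolutely convergent) integral ∫_{ℝ^d} K(t,x) f(x) dx tends to f(0) as t → 0⁺. -/
open MeasureTheory Filter

/-- The free Schrödinger kernel `K(t,x) = (4πit)^{-d/2} · exp(i‖x‖²/(4t))`,
where the complex power is the principal branch. -/
noncomputable def schrodingerKernel (d : ℕ) (t : ℝ) (x : EuclideanSpace ℝ (Fin d)) : ℂ :=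
  ((4 * (Real.pi : ℂ) * Complex.I * (t : ℂ)) ^ (-(d : ℂ) / 2)) *
    Complex.exp (Complex.I * ((‖x‖ : ℝ) : ℂ) ^ 2 / (4 * (t : ℂ)))

open Complex Real
open scoped FourierTransform RealInnerProductSpace

namespace SchrodingerAux

variable {d : ℕ}

local notation "𝕍" => EuclideanSpace ℝ (Fin d)

lemma norm_exp_div_le_one {z : ℂ} (hz : 0 ≤ z.re) (r : ℝ) :
    ‖Complex.exp (-(r : ℂ) ^ 2 / (4 * z))‖ ≤ 1 := by
  rw [Complex.norm_exp, Real.exp_le_one_iff]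
  have hnum : -(r : ℂ) ^ 2 = ((-(r ^ 2) : ℝ) : ℂ) := by push_cast; ring
  rw [hnum, Complex.div_re, Complex.ofReal_re, Complex.ofReal_im]
  have h4 : (4 * z).re = 4 * z.re := by simp
  have h0 : 0 ≤ Complex.normSq (4 * z) := Complex.normSq_nonneg _
  rw [h4]
  simp only [zero_mul, zero_div, add_zero]
  apply div_nonpos_of_nonpos_of_nonneg _ h0
  nlinarith [sq_nonneg r]

lemma norm_exp_mul_le_one {z : ℂ} (hz : 0 ≤ z.re) (r : ℝ) :
    ‖Complex.exp (-(4 * (π : ℂ) ^ 2 * z) * (r : ℂ) ^ 2)‖ ≤ 1 := by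
  rw [Complex.norm_exp, Real.exp_le_one_iff]
  have h : -(4 * (π : ℂ) ^ 2 * z) * (r : ℂ) ^ 2 = ((-(4 * π ^ 2 * r ^ 2) : ℝ) : ℂ) * z := by
    push_cast; ring
  rw [h, Complex.re_ofReal_mul]
  nlinarith [sq_nonneg π, sq_nonneg r, mul_nonneg (mul_nonneg (sq_nonneg π) (sq_nonneg r)) hz]

lemma re_four_pi_sq_mul (z : ℂ) : (4 * (π : ℂ) ^ 2 * z).re = 4 * π ^ 2 * z.re := by
  have h : 4 * (π : ℂ) ^ 2 * z = ((4 * π ^ 2 : ℝ) : ℂ) * z := by push_cast; ring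
  rw [h, Complex.re_ofReal_mul]

lemma re_four_pi_mul (z : ℂ) : (4 * (π : ℂ) * z).re = 4 * π * z.re := by
  have h : 4 * (π : ℂ) * z = ((4 * π : ℝ) : ℂ) * z := by push_cast; ring
  rw [h, Complex.re_ofReal_mul]

/-- The key identity for `Re z > 0`, via the Gaussian Fourier transform and the
multiplication formula. -/
lemma aux_id (f : SchwartzMap (EuclideanSpace ℝ (Fin d)) ℂ) {z : ℂ} (hz : 0 < z.re) :
    (4 * (π : ℂ) * z) ^ (-(d : ℂ) / 2) *
        ∫ x : 𝕍, Complex.exp (-(‖x‖ : ℂ) ^ 2 / (4 * z)) * f x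
      = ∫ ξ : 𝕍, Complex.exp (-(4 * (π : ℂ) ^ 2 * z) * (‖ξ‖ : ℂ) ^ 2) * 𝓕 (⇑f) ξ := by
  have hz0 : z ≠ 0 := fun h => by simp [h] at hz
  have hπ : (π : ℂ) ≠ 0 := Complex.ofReal_ne_zero.2 Real.pi_ne_zero
  have hb : 0 < (4 * (π : ℂ) ^ 2 * z).re := by
    rw [re_four_pi_sq_mul]
    have := Real.pi_pos
    positivity
  set g : 𝕍 → ℂ := fun v : 𝕍 => Complex.exp (-(4 * (π : ℂ) ^ 2 * z) * (‖v‖ : ℂ) ^ 2) with hg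
  have J : Integrable g := by
    simpa [hg] using GaussianFourier.integrable_cexp_neg_mul_sq_norm_add hb 0 (0 : 𝕍)
  have key : ∫ ξ : 𝕍, 𝓕 g ξ • f ξ
      = ∫ x : 𝕍, g x • VectorFourier.fourierIntegral 𝐞 volume (innerₗ 𝕍).flip (⇑f) x :=
    VectorFourier.integral_fourierIntegral_smul_eq_flip
      (L := innerₗ 𝕍) Real.continuous_fourierChar continuous_inner J f.integrable
  have hflip : ∀ x : 𝕍,
      VectorFourier.fourierIntegral 𝐞 volume (innerₗ 𝕍).flip (⇑f) x = 𝓕 (⇑f) x := by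
    intro x
    simp only [VectorFourier.fourierIntegral, Real.fourier_eq]
    congr 1 with v
    congr 2
    simp [real_inner_comm]
  have h𝓕 : ∀ ξ : 𝕍,
      𝓕 g ξ = (4 * (π : ℂ) * z) ^ (-(d : ℂ) / 2) * Complex.exp (-(‖ξ‖ : ℂ) ^ 2 / (4 * z)) := by
    intro ξ
    rw [hg, fourier_gaussian_innerProductSpace hb]
    have harg : (4 * (π : ℂ) * z).arg ≠ π := by
      have hre : 0 < (4 * (π : ℂ) * z).re := by
        rw [re_four_pi_mul]; have := Real.pi_pos; positivity
      intro h
      rw [Complex.arg_eq_pi_iff] at h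
      linarith [h.1]
    congr 1
    · have hbase : (π : ℂ) / (4 * (π : ℂ) ^ 2 * z) = (4 * (π : ℂ) * z)⁻¹ := by
        field_simp
      rw [hbase, Complex.inv_cpow _ _ harg, ← Complex.cpow_neg]
      congr 1
      have hfin : Module.finrank ℝ 𝕍 = d := by simp
      rw [hfin]
      ring
    · have h4z : (4:ℂ) * z ≠ 0 := mul_ne_zero (by norm_num) hz0
      have hbz : 4 * (π:ℂ) ^ 2 * z ≠ 0 :=
        mul_ne_zero (mul_ne_zero (by norm_num) (pow_ne_zero _ hπ)) hz0
      congr 1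
      rw [div_eq_div_iff hbz h4z]
      ring
  calc (4 * (π : ℂ) * z) ^ (-(d : ℂ) / 2) *
        ∫ x : 𝕍, Complex.exp (-(‖x‖ : ℂ) ^ 2 / (4 * z)) * f x
      = ∫ x : 𝕍, 𝓕 g x • f x := by
        rw [← integral_const_mul]
        congr 1 with x
        rw [h𝓕 x, smul_eq_mul]
        exact (mul_assoc _ _ _).symm
    _ = ∫ x : 𝕍, g x • 𝓕 (⇑f) x := by rw [key]; simp_rw [hflip]
    _ = ∫ ξ : 𝕍, Complex.exp (-(4 * (π : ℂ) ^ 2 * z) * (‖ξ‖ : ℂ) ^ 2) * 𝓕 (⇑f) ξ := by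
        simp_rw [smul_eq_mul]
        rfl

/-- Integrability of the Fourier transform of a Schwartz function. -/
lemma integrable_fourier (f : SchwartzMap (EuclideanSpace ℝ (Fin d)) ℂ) :
    Integrable (𝓕 (⇑f)) := by
  have := (SchwartzMap.fourierTransformCLM ℂ (V := EuclideanSpace ℝ (Fin d)) (E := ℂ) f).integrable
    (μ := volume)
  exact this

/-- The boundary identity at `z = t i`, `t > 0`, obtained by letting `ε → 0⁺` in `aux_id`
applied at `z = ε + t i`. -/
lemma boundary_id (f : SchwartzMap (EuclideanSpace ℝ (Fin d)) ℂ) {t : ℝ} (ht : 0 < t) :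
    (4 * (π : ℂ) * ((t : ℂ) * Complex.I)) ^ (-(d : ℂ) / 2) *
        ∫ x : 𝕍, Complex.exp (-(‖x‖ : ℂ) ^ 2 / (4 * ((t : ℂ) * Complex.I))) * f x
      = ∫ ξ : 𝕍, Complex.exp (-(4 * (π : ℂ) ^ 2 * ((t : ℂ) * Complex.I)) * (‖ξ‖ : ℂ) ^ 2)
          * 𝓕 (⇑f) ξ := by
  set w : ℂ := (t : ℂ) * Complex.I with hw
  have hw0 : w ≠ 0 := by
    simp [hw, Complex.ext_iff, ht.ne']
  have hwre : w.re = 0 := by simp [hw]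
  -- the function of ε whose limits on both sides we compare
  set F : ℝ → ℂ := fun ε =>
    (4 * (π : ℂ) * ((ε : ℂ) + w)) ^ (-(d : ℂ) / 2) *
      ∫ x : 𝕍, Complex.exp (-(‖x‖ : ℂ) ^ 2 / (4 * ((ε : ℂ) + w))) * f x with hF
  have hzlim : Tendsto (fun ε : ℝ => (ε : ℂ) + w) (nhdsWithin 0 (Set.Ioi 0)) (nhds w) := by
    have : Tendsto (fun ε : ℝ => (ε : ℂ) + w) (nhds 0) (nhds w) := by
      have := (Complex.continuous_ofReal.tendsto (0 : ℝ)).add_const w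
      simpa using this
    exact this.mono_left nhdsWithin_le_nhds
  have h1 : Tendsto F (nhdsWithin 0 (Set.Ioi 0))
      (nhds ((4 * (π : ℂ) * w) ^ (-(d : ℂ) / 2) *
        ∫ x : 𝕍, Complex.exp (-(‖x‖ : ℂ) ^ 2 / (4 * w)) * f x)) := by
    apply Tendsto.mul
    · -- continuity of the power
      have hmem : (4 * (π : ℂ) * w) ∈ Complex.slitPlane := by
        right
        have he : 4 * (π : ℂ) * w = ((4 * π : ℝ) : ℂ) * w := by push_cast; ring
        rw [he, Complex.im_ofReal_mul]
        have hwim : w.im = t := by simp [hw]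
        rw [hwim]
        have := Real.pi_pos
        positivity
      have hc : ContinuousAt (fun u : ℂ => (4 * (π : ℂ) * u) ^ (-(d : ℂ) / 2)) w := by
        apply (_root_.continuousAt_cpow_const hmem).comp
        fun_prop
      exact hc.tendsto.comp hzlim
    · -- dominated convergence for the integral
      apply tendsto_integral_filter_of_dominated_convergence (fun x : 𝕍 => ‖f x‖)
      · filter_upwards with ε
        apply Continuous.aestronglyMeasurable
        apply Continuous.mul _ f.continuous
        apply Complex.continuous_exp.comp
        fun_prop
      · filter_upwards [self_mem_nhdsWithin] with ε (hε : ε ∈ Set.Ioi (0:ℝ))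
        filter_upwards with x
        rw [norm_mul]
        have hre : 0 ≤ ((ε : ℂ) + w).re := by
          simp [hwre]
          exact le_of_lt hε
        calc ‖Complex.exp (-(‖x‖ : ℂ) ^ 2 / (4 * ((ε : ℂ) + w)))‖ * ‖f x‖
            ≤ 1 * ‖f x‖ := by
              gcongr
              exact norm_exp_div_le_one hre ‖x‖
          _ = ‖f x‖ := one_mul _
      · exact f.integrable.norm
      · filter_upwards with x
        apply Tendsto.mul_const
        apply (Complex.continuous_exp.tendsto _).comp
        apply Tendsto.div tendsto_const_nhds
        · exact (tendsto_const_nhds.mul hzlim)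
        · simp [hw0]
  have h2 : Tendsto F (nhdsWithin 0 (Set.Ioi 0))
      (nhds (∫ ξ : 𝕍, Complex.exp (-(4 * (π : ℂ) ^ 2 * w) * (‖ξ‖ : ℂ) ^ 2) * 𝓕 (⇑f) ξ)) := by
    have hcong : ∀ᶠ ε in nhdsWithin 0 (Set.Ioi 0),
        F ε = ∫ ξ : 𝕍, Complex.exp (-(4 * (π : ℂ) ^ 2 * ((ε : ℂ) + w)) * (‖ξ‖ : ℂ) ^ 2)
          * 𝓕 (⇑f) ξ := by
      filter_upwards [self_mem_nhdsWithin] with ε (hε : ε ∈ Set.Ioi (0:ℝ))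
      apply aux_id
      simp [hwre]
      exact hε
    rw [tendsto_congr' hcong]
    apply tendsto_integral_filter_of_dominated_convergence (fun ξ : 𝕍 => ‖𝓕 (⇑f) ξ‖)
    · filter_upwards with ε
      apply Continuous.aestronglyMeasurable
      apply Continuous.mul _ (VectorFourier.fourierIntegral_continuous
        Real.continuous_fourierChar continuous_inner f.integrable)
      apply Complex.continuous_exp.comp
      fun_prop
    · filter_upwards [self_mem_nhdsWithin] with ε (hε : ε ∈ Set.Ioi (0:ℝ))
      filter_upwards with ξ
      rw [norm_mul]
      have hre : 0 ≤ ((ε : ℂ) + w).re := by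
        simp [hwre]
        exact le_of_lt hε
      calc ‖Complex.exp (-(4 * (π : ℂ) ^ 2 * ((ε : ℂ) + w)) * (‖ξ‖ : ℂ) ^ 2)‖ * ‖𝓕 (⇑f) ξ‖
          ≤ 1 * ‖𝓕 (⇑f) ξ‖ := by
            gcongr
            exact norm_exp_mul_le_one hre ‖ξ‖
        _ = ‖𝓕 (⇑f) ξ‖ := one_mul _
    · exact (integrable_fourier f).norm
    · filter_upwards with ξ
      apply Tendsto.mul_const
      apply (Complex.continuous_exp.tendsto _).comp
      apply Tendsto.mul_const
      exact (tendsto_const_nhds.mul hzlim).neg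
  exact tendsto_nhds_unique h1 h2

end SchrodingerAux

/-- The family `{K(t,·)}_{t>0}` is an approximate identity at the origin: for every
Schwartz function `f : ℝ^d → ℂ`, `∫ K(t,x) f(x) dx → f(0)` as `t → 0⁺`. -/
theorem schrodingerKernel_approximate_identity (d : ℕ) (hd : 1 ≤ d)
    (f : SchwartzMap (EuclideanSpace ℝ (Fin d)) ℂ) :
    Tendsto (fun t : ℝ => ∫ x : EuclideanSpace ℝ (Fin d), schrodingerKernel d t x * f x)
      (nhdsWithin 0 (Set.Ioi 0)) (nhds (f 0)) := by
  open SchrodingerAux in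
  have hcong : ∀ᶠ t in nhdsWithin (0:ℝ) (Set.Ioi 0),
      (∫ x : EuclideanSpace ℝ (Fin d), schrodingerKernel d t x * f x)
        = ∫ ξ : EuclideanSpace ℝ (Fin d),
            Complex.exp (-(4 * (Real.pi : ℂ) ^ 2 * ((t : ℂ) * Complex.I)) * (‖ξ‖ : ℂ) ^ 2)
              * 𝓕 (⇑f) ξ := by
    filter_upwards [self_mem_nhdsWithin] with t (ht : t ∈ Set.Ioi (0:ℝ))
    have ht' : (0:ℝ) < t := ht
    have htc : (t : ℂ) ≠ 0 := Complex.ofReal_ne_zero.2 ht'.ne'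
    have step1 : (∫ x : EuclideanSpace ℝ (Fin d), schrodingerKernel d t x * f x)
        = (4 * (Real.pi : ℂ) * ((t : ℂ) * Complex.I)) ^ (-(d : ℂ) / 2) *
            ∫ x : EuclideanSpace ℝ (Fin d),
              Complex.exp (-(‖x‖ : ℂ) ^ 2 / (4 * ((t : ℂ) * Complex.I))) * f x := by
      rw [← MeasureTheory.integral_const_mul]
      congr 1 with x
      unfold schrodingerKernel
      rw [mul_assoc]
      congr 2
      · ring_nf
      · congr 1
        rw [div_eq_div_iff (by simp [htc]) (by simp [htc, Complex.I_ne_zero])]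
        ring_nf
        simp [Complex.I_sq]
    rw [step1, SchrodingerAux.boundary_id f ht']
  rw [Filter.tendsto_congr' hcong]
  have hlim : Tendsto (fun t : ℝ => ∫ ξ : EuclideanSpace ℝ (Fin d),
      Complex.exp (-(4 * (Real.pi : ℂ) ^ 2 * ((t : ℂ) * Complex.I)) * (‖ξ‖ : ℂ) ^ 2)
        * 𝓕 (⇑f) ξ) (nhdsWithin 0 (Set.Ioi 0))
      (nhds (∫ ξ : EuclideanSpace ℝ (Fin d), 𝓕 (⇑f) ξ)) := by
    apply tendsto_integral_filter_of_dominated_convergence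
      (fun ξ : EuclideanSpace ℝ (Fin d) => ‖𝓕 (⇑f) ξ‖)
    · filter_upwards with t
      apply Continuous.aestronglyMeasurable
      apply Continuous.mul _ (VectorFourier.fourierIntegral_continuous
        Real.continuous_fourierChar continuous_inner f.integrable)
      apply Complex.continuous_exp.comp
      fun_prop
    · filter_upwards [self_mem_nhdsWithin] with t (ht : t ∈ Set.Ioi (0:ℝ))
      filter_upwards with ξ
      rw [norm_mul]
      have hre : 0 ≤ ((t : ℂ) * Complex.I).re := by simp
      calc ‖Complex.exp (-(4 * (Real.pi : ℂ) ^ 2 * ((t : ℂ) * Complex.I)) * (‖ξ‖ : ℂ) ^ 2)‖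
            * ‖𝓕 (⇑f) ξ‖
          ≤ 1 * ‖𝓕 (⇑f) ξ‖ := by
            gcongr
            exact SchrodingerAux.norm_exp_mul_le_one hre ‖ξ‖
        _ = ‖𝓕 (⇑f) ξ‖ := one_mul _
    · exact (SchrodingerAux.integrable_fourier f).norm
    · filter_upwards with ξ
      have : Tendsto (fun t : ℝ => -(4 * (Real.pi : ℂ) ^ 2 * ((t : ℂ) * Complex.I))
          * (‖ξ‖ : ℂ) ^ 2) (nhdsWithin 0 (Set.Ioi 0)) (nhds 0) := by
        have hz : Tendsto (fun t : ℝ => (t : ℂ)) (nhdsWithin 0 (Set.Ioi 0)) (nhds 0) := by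
          have := Complex.continuous_ofReal.tendsto (0 : ℝ)
          simpa using this.mono_left nhdsWithin_le_nhds
        have := (((hz.mul_const Complex.I).const_mul
          (4 * (Real.pi : ℂ) ^ 2)).neg).mul_const ((‖ξ‖ : ℂ) ^ 2)
        simpa using this
      have hexp := (Complex.continuous_exp.tendsto 0).comp this
      rw [Complex.exp_zero] at hexp
      simpa using hexp.mul_const (𝓕 (⇑f) ξ)
  have hinv : (∫ ξ : EuclideanSpace ℝ (Fin d), 𝓕 (⇑f) ξ) = f 0 := by
    have h := f.integrable.fourierInv_fourier_eq (SchrodingerAux.integrable_fourier f)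
      (f.continuous.continuousAt (x := 0))
    rw [← h, Real.fourierInv_eq]
    simp
  rw [hinv] at hlim
  exact hlim
end

section
/- Let d ≥ 1 and let g : ℝ × ℝ^d → ℂ be a Schwartz function. Then ω · ∫_{[0,∞) × ℝ^d} g(t,k) e^{it(‖k‖² − ω)} dk dt tends to −i · ∫_{ℝ^d} g(0,k) dk as ω → −∞. Consequently, if ∫_{ℝ^d} g(0,k) dk ≠ 0, the function ω ↦ ∫_{[0,∞) × ℝ^d} g(t,k) e^{it(‖k‖² − ω)} dk dt is not rapidly decreasing in the direction ω → −∞. -/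
open MeasureTheory Filter Set

namespace SchrodingerWFAux


lemma norm_exp_I_mul (t b : ℝ) : ‖Complex.exp (Complex.I * t * b)‖ = 1 := by
  have h : Complex.I * t * b = ((t * b : ℝ) : ℂ) * Complex.I := by push_cast; ring
  rw [h, Complex.norm_exp_ofReal_mul_I]

lemma decay_bound (d : ℕ) (f : SchwartzMap (ℝ × EuclideanSpace ℝ (Fin d)) ℂ) :
    ∃ C : ℝ, 0 ≤ C ∧ ∀ (t : ℝ) (k : EuclideanSpace ℝ (Fin d)),
      ‖f (t, k)‖ ≤ C * ((1 + |t|) ^ 2)⁻¹ * ((1 + ‖k‖) ^ (d + 1))⁻¹ := by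
  refine ⟨2 ^ (d + 3) * (Finset.Iic ((d+3, 0) : ℕ × ℕ)).sup
    (fun m => SchwartzMap.seminorm ℝ m.1 m.2) f, by positivity, ?_⟩
  intro t k
  have h := SchwartzMap.one_add_le_sup_seminorm_apply (𝕜 := ℝ) (m := (d+3, 0))
    le_rfl le_rfl f (t, k)
  rw [norm_iteratedFDeriv_zero] at h
  have hn : ‖((t, k) : ℝ × EuclideanSpace ℝ (Fin d))‖ = max |t| ‖k‖ := by
    rw [Prod.norm_def, Real.norm_eq_abs]
  set x : ℝ × EuclideanSpace ℝ (Fin d) := (t, k)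
  have ht : 1 + |t| ≤ 1 + ‖x‖ := by
    rw [hn]; have := le_max_left |t| ‖k‖; linarith
  have hk : 1 + ‖k‖ ≤ 1 + ‖x‖ := by
    rw [hn]; have := le_max_right |t| ‖k‖; linarith
  have hprod : (1 + |t|) ^ 2 * (1 + ‖k‖) ^ (d + 1) ≤ (1 + ‖x‖) ^ (d + 3) := by
    have h1 : (1 + |t|) ^ 2 ≤ (1 + ‖x‖) ^ 2 := pow_le_pow_left₀ (by positivity) ht 2
    have h2 : (1 + ‖k‖) ^ (d+1) ≤ (1 + ‖x‖) ^ (d+1) := pow_le_pow_left₀ (by positivity) hk _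
    calc (1 + |t|) ^ 2 * (1 + ‖k‖) ^ (d + 1) ≤ (1 + ‖x‖) ^ 2 * (1 + ‖x‖) ^ (d+1) := by
          apply mul_le_mul h1 h2 (by positivity) (by positivity)
      _ = (1 + ‖x‖) ^ (d + 3) := by ring
  have hb : (1 + |t|) ^ 2 * (1 + ‖k‖) ^ (d + 1) * ‖f x‖ ≤
      2 ^ (d+3) * (Finset.Iic ((d+3, 0) : ℕ × ℕ)).sup
        (fun m => SchwartzMap.seminorm ℝ m.1 m.2) f := by
    refine le_trans ?_ h
    exact mul_le_mul_of_nonneg_right hprod (norm_nonneg _)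
  have hpos : (0:ℝ) < (1 + |t|) ^ 2 * (1 + ‖k‖) ^ (d + 1) := by positivity
  rw [mul_assoc, ← mul_inv, ← div_eq_mul_inv, le_div_iff₀ hpos, mul_comm]
  exact hb

lemma mul_exp_integrableOn {f : ℝ → ℂ} (b : ℝ) (hf : IntegrableOn f (Ioi 0)) :
    IntegrableOn (fun t => f t * Complex.exp (Complex.I * t * b)) (Ioi 0) := by
  apply hf.norm.mono'
  · exact hf.aestronglyMeasurable.mul
      ((Complex.continuous_exp.comp (by fun_prop)).aestronglyMeasurable)
  · filter_upwards with t
    rw [norm_mul, norm_exp_I_mul, mul_one]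

lemma ibp (φ ψ : ℝ → ℂ) (b : ℝ) (hb : 0 < b)
    (hderiv : ∀ t, HasDerivAt φ (ψ t) t)
    (hφint : IntegrableOn φ (Ioi 0))
    (hψint : IntegrableOn ψ (Ioi 0))
    (hφ0 : Tendsto φ atTop (nhds 0)) :
    ∫ t in Ioi (0:ℝ), φ t * Complex.exp (Complex.I * t * b)
      = (Complex.I * φ 0 + Complex.I * ∫ t in Ioi (0:ℝ),
          ψ t * Complex.exp (Complex.I * t * b)) / b := by
  set e : ℝ → ℂ := fun t => Complex.exp (Complex.I * t * b) with he_def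
  have he : ∀ t : ℝ, HasDerivAt e (Complex.I * b * e t) t := by
    intro t
    have h1 : HasDerivAt (fun s : ℝ => (s : ℂ)) 1 t := Complex.ofRealCLM.hasDerivAt
    have h2 := ((h1.const_mul Complex.I).mul_const (b:ℂ)).cexp
    simpa [he_def, mul_comm] using h2
  have hnorme : ∀ t : ℝ, ‖e t‖ = 1 := fun t => norm_exp_I_mul t b
  have hΦderiv : ∀ t : ℝ, HasDerivAt (fun t => φ t * e t)
      (ψ t * e t + φ t * (Complex.I * b * e t)) t := fun t => (hderiv t).mul (he t)
  have hint1 : IntegrableOn (fun t => ψ t * e t) (Ioi 0) := mul_exp_integrableOn b hψint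
  have heq2 : (fun t => φ t * (Complex.I * b * e t))
      = fun t => (Complex.I * b) * (φ t * e t) := by funext t; ring
  have hint2 : IntegrableOn (fun t => φ t * (Complex.I * b * e t)) (Ioi 0) := by
    rw [heq2]; exact (mul_exp_integrableOn b hφint).const_mul (Complex.I * b)
  have hΦtend : Tendsto (fun t => φ t * e t) atTop (nhds 0) := by
    rw [tendsto_zero_iff_norm_tendsto_zero]
    have h := hφ0.norm
    rw [norm_zero] at h
    apply h.congr
    intro t; rw [norm_mul, hnorme, mul_one]
  have key := integral_Ioi_of_hasDerivAt_of_tendsto'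
    (f' := fun t => ψ t * e t + φ t * (Complex.I * b * e t))
    (fun t _ => hΦderiv t) (hint1.add hint2) hΦtend
  rw [integral_add hint1 hint2] at key
  have hconst : ∫ t in Ioi (0:ℝ), φ t * (Complex.I * b * e t)
      = (Complex.I * b) * ∫ t in Ioi (0:ℝ), φ t * e t := by
    rw [← integral_const_mul, heq2]
  rw [hconst] at key
  have he0 : e 0 = 1 := by rw [he_def]; simp
  rw [he0] at key
  set X := ∫ t in Ioi (0:ℝ), φ t * e t
  set S := ∫ t in Ioi (0:ℝ), ψ t * e t
  have hbne : (b:ℂ) ≠ 0 := by exact_mod_cast hb.ne'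
  have hIb : Complex.I * b ≠ 0 := mul_ne_zero Complex.I_ne_zero hbne
  have key2 : Complex.I * b * X = - (φ 0) - S := by
    have h : S + Complex.I * b * X = 0 - φ 0 * 1 := key
    linear_combination h
  apply mul_left_cancel₀ hIb
  rw [key2]
  field_simp
  ring_nf
  simp [Complex.I_sq]
  ring

lemma integrable_inv_pow (d : ℕ) :
    Integrable (fun k : EuclideanSpace ℝ (Fin d) => ((1 + ‖k‖) ^ (d + 1))⁻¹) := by
  have h : ((Module.finrank ℝ (EuclideanSpace ℝ (Fin d)) : ℝ)) < ((d:ℝ) + 1) := by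
    simp [finrank_euclideanSpace_fin]
  have h2 := integrable_one_add_norm (E := EuclideanSpace ℝ (Fin d)) (μ := volume) h
  refine h2.congr (Eventually.of_forall fun k => ?_)
  simp only
  rw [show ((d:ℝ) + 1) = ((d + 1 : ℕ) : ℝ) by push_cast; ring,
    Real.rpow_neg (by positivity), Real.rpow_natCast]

lemma slice_integrable {f : ℝ → ℂ} {C D : ℝ}
    (hcont : Continuous f) (hC : ∀ t, ‖f t‖ ≤ C * ((1 + |t|) ^ 2)⁻¹ * D)
    (hCD : 0 ≤ C * D) : Integrable f := by
  apply Integrable.mono' (integrable_inv_one_add_sq.const_mul (C * D)) hcont.aestronglyMeasurable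
  filter_upwards with t
  have h2 : ((1 + |t|) ^ 2)⁻¹ ≤ (1 + t ^ 2)⁻¹ := by
    apply inv_anti₀ (by positivity)
    nlinarith [abs_nonneg t, _root_.sq_abs t]
  calc ‖f t‖ ≤ C * ((1 + |t|) ^ 2)⁻¹ * D := hC t
    _ = (C * D) * ((1 + |t|) ^ 2)⁻¹ := by ring
    _ ≤ (C * D) * (1 + t ^ 2)⁻¹ := mul_le_mul_of_nonneg_left h2 hCD

lemma slice_tendsto_zero {f : ℝ → ℂ} {C D : ℝ}
    (hC : ∀ t, ‖f t‖ ≤ C * ((1 + |t|) ^ 2)⁻¹ * D) :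
    Tendsto f atTop (nhds 0) := by
  rw [tendsto_zero_iff_norm_tendsto_zero]
  apply squeeze_zero (fun t => norm_nonneg _)
    (g := fun t => (C * D) * ((1 + |t|) ^ 2)⁻¹)
    (fun t => (hC t).trans (le_of_eq (by ring)))
  have hb : Tendsto (fun t : ℝ => (1 + |t|) ^ 2) atTop atTop := by
    apply tendsto_atTop_mono (fun t => ?_) tendsto_abs_atTop_atTop
    nlinarith [abs_nonneg t]
  have h3 : Tendsto (fun t : ℝ => (C * D) / ((1 + |t|) ^ 2)) atTop (nhds 0) :=
    Tendsto.div_atTop tendsto_const_nhds hb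
  apply h3.congr
  intro t; rw [div_eq_mul_inv]

lemma integral_norm_slice_le {f : ℝ → ℂ} {C D : ℝ}
    (hcont : Continuous f) (hC : ∀ t, ‖f t‖ ≤ C * ((1 + |t|) ^ 2)⁻¹ * D)
    (hC0 : 0 ≤ C) (hD0 : 0 ≤ D) :
    ∫ t in Ioi (0:ℝ), ‖f t‖ ≤ C * D * ∫ t : ℝ, (1 + t ^ 2)⁻¹ := by
  have hCD : 0 ≤ C * D := mul_nonneg hC0 hD0
  have hint : Integrable (fun t : ℝ => (C * D) * (1 + t ^ 2)⁻¹) :=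
    integrable_inv_one_add_sq.const_mul (C * D)
  calc ∫ t in Ioi (0:ℝ), ‖f t‖ ≤ ∫ t in Ioi (0:ℝ), (C * D) * (1 + t ^ 2)⁻¹ := by
        apply integral_mono_of_nonneg (Eventually.of_forall fun t => norm_nonneg _)
          hint.integrableOn
        filter_upwards with t
        have h2 : ((1 + |t|) ^ 2)⁻¹ ≤ (1 + t ^ 2)⁻¹ := by
          apply inv_anti₀ (by positivity)
          nlinarith [abs_nonneg t, _root_.sq_abs t]
        calc ‖f t‖ ≤ C * ((1 + |t|) ^ 2)⁻¹ * D := hC t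
          _ = (C * D) * ((1 + |t|) ^ 2)⁻¹ := by ring
          _ ≤ (C * D) * (1 + t ^ 2)⁻¹ := mul_le_mul_of_nonneg_left h2 hCD
    _ ≤ ∫ t : ℝ, (C * D) * (1 + t ^ 2)⁻¹ :=
        setIntegral_le_integral hint (Eventually.of_forall fun t => by positivity)
    _ = C * D * ∫ t : ℝ, (1 + t ^ 2)⁻¹ := integral_const_mul _ _

lemma slice_hasDerivAt (d : ℕ) (f : SchwartzMap (ℝ × EuclideanSpace ℝ (Fin d)) ℂ)
    (k : EuclideanSpace ℝ (Fin d)) (t : ℝ) :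
    HasDerivAt (fun s => f (s, k))
      ((LineDeriv.lineDerivOp ((1:ℝ), (0:EuclideanSpace ℝ (Fin d))) f :
        SchwartzMap (ℝ × EuclideanSpace ℝ (Fin d)) ℂ) (t, k)) t := by
  have h1 : HasDerivAt (fun s : ℝ => ((s, k) : ℝ × EuclideanSpace ℝ (Fin d)))
      ((1:ℝ), (0:EuclideanSpace ℝ (Fin d))) t :=
    (hasDerivAt_id t).prodMk (hasDerivAt_const t k)
  have h2 := (f.differentiableAt.hasFDerivAt).comp_hasDerivAt t h1
  exact h2

end SchrodingerWFAux


set_option maxHeartbeats 1000000 in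
open SchrodingerWFAux in
/-- For a Schwartz function `g : ℝ × ℝ^d → ℂ`,
`ω · ∫_{[0,∞)×ℝ^d} g(t,k) e^{it(‖k‖²−ω)} dk dt → −i ∫ g(0,k) dk` as `ω → −∞`.
Consequently, if `∫ g(0,k) dk ≠ 0`, the function
`ω ↦ ∫_{[0,∞)×ℝ^d} g(t,k) e^{it(‖k‖²−ω)} dk dt` is not rapidly decreasing as `ω → −∞`. -/
theorem schrodinger_wavefront_not_rapidly_decreasing (d : ℕ) (hd : 1 ≤ d)
    (g : SchwartzMap (ℝ × EuclideanSpace ℝ (Fin d)) ℂ) :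
    Tendsto (fun ω : ℝ => (ω : ℂ) *
        ∫ t in Set.Ici (0 : ℝ), ∫ k : EuclideanSpace ℝ (Fin d),
          g (t, k) * Complex.exp (Complex.I * (t : ℂ) * ((‖k‖ ^ 2 - ω : ℝ) : ℂ)))
      atBot (nhds (-Complex.I * ∫ k : EuclideanSpace ℝ (Fin d), g (0, k))) ∧
    ((∫ k : EuclideanSpace ℝ (Fin d), g (0, k)) ≠ 0 →
      ¬ Tendsto (fun ω : ℝ => (ω : ℂ) *
          ∫ t in Set.Ici (0 : ℝ), ∫ k : EuclideanSpace ℝ (Fin d),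
            g (t, k) * Complex.exp (Complex.I * (t : ℂ) * ((‖k‖ ^ 2 - ω : ℝ) : ℂ)))
        atBot (nhds 0)) := by
  obtain ⟨C₀, hC₀0, hC0⟩ := decay_bound d g
  set g₁ := (LineDeriv.lineDerivOp ((1:ℝ), (0:EuclideanSpace ℝ (Fin d))) g :
    SchwartzMap (ℝ × EuclideanSpace ℝ (Fin d)) ℂ) with hg₁def
  set g₂ := (LineDeriv.lineDerivOp ((1:ℝ), (0:EuclideanSpace ℝ (Fin d))) g₁ :
    SchwartzMap (ℝ × EuclideanSpace ℝ (Fin d)) ℂ) with hg₂def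
  obtain ⟨C₁, hC₁0, hC1⟩ := decay_bound d g₁
  obtain ⟨C₂, hC₂0, hC2⟩ := decay_bound d g₂
  set T : ℝ := ∫ t : ℝ, (1 + t ^ 2)⁻¹ with hTdef
  have hT0 : 0 ≤ T := integral_nonneg fun t => by positivity
  have hD0 : ∀ k : EuclideanSpace ℝ (Fin d), (0:ℝ) ≤ ((1 + ‖k‖) ^ (d + 1))⁻¹ :=
    fun k => by positivity
  have hslicecont : ∀ (f : SchwartzMap (ℝ × EuclideanSpace ℝ (Fin d)) ℂ)
      (k : EuclideanSpace ℝ (Fin d)), Continuous fun t : ℝ => f (t, k) :=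
    fun f k => f.continuous.comp (by fun_prop)
  set J : ℝ → EuclideanSpace ℝ (Fin d) → ℂ := fun ω k =>
    ∫ t in Ioi (0:ℝ), g₁ (t, k) * Complex.exp (Complex.I * t * ((‖k‖ ^ 2 - ω : ℝ) : ℂ))
    with hJdef
  have hint0 : ∀ k, IntegrableOn (fun t : ℝ => g (t, k)) (Ioi 0) :=
    fun k => (slice_integrable (hslicecont g k) (fun t => hC0 t k)
      (mul_nonneg hC₀0 (hD0 k))).integrableOn
  have hint1 : ∀ k, IntegrableOn (fun t : ℝ => g₁ (t, k)) (Ioi 0) :=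
    fun k => (slice_integrable (hslicecont g₁ k) (fun t => hC1 t k)
      (mul_nonneg hC₁0 (hD0 k))).integrableOn
  have hint2 : ∀ k, IntegrableOn (fun t : ℝ => g₂ (t, k)) (Ioi 0) :=
    fun k => (slice_integrable (hslicecont g₂ k) (fun t => hC2 t k)
      (mul_nonneg hC₂0 (hD0 k))).integrableOn
  have htend0 : ∀ k, Tendsto (fun t : ℝ => g (t, k)) atTop (nhds 0) :=
    fun k => slice_tendsto_zero (fun t => hC0 t k)
  have htend1 : ∀ k, Tendsto (fun t : ℝ => g₁ (t, k)) atTop (nhds 0) :=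
    fun k => slice_tendsto_zero (fun t => hC1 t k)
  have hb : ∀ (ω : ℝ), ω < 0 → ∀ (k : EuclideanSpace ℝ (Fin d)), (0:ℝ) < ‖k‖ ^ 2 - ω := by
    intro ω hω k; nlinarith [sq_nonneg ‖k‖]
  -- inner identity via integration by parts
  have hinner : ∀ (ω : ℝ), ω < 0 → ∀ k,
      (∫ t in Ici (0:ℝ), g (t, k) * Complex.exp (Complex.I * t * ((‖k‖ ^ 2 - ω : ℝ) : ℂ)))
        = (Complex.I * g (0, k) + Complex.I * J ω k) / ((‖k‖ ^ 2 - ω : ℝ) : ℂ) := by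
    intro ω hω k
    rw [integral_Ici_eq_integral_Ioi]
    exact ibp _ _ _ (hb ω hω k) (fun t => slice_hasDerivAt d g k t)
      (hint0 k) (hint1 k) (htend0 k)
  -- first J bound (uniform)
  have hJle : ∀ (ω : ℝ) (k : EuclideanSpace ℝ (Fin d)),
      ‖J ω k‖ ≤ C₁ * ((1 + ‖k‖) ^ (d + 1))⁻¹ * T := by
    intro ω k
    refine le_trans (norm_integral_le_integral_norm _) ?_
    have heqn : (fun t : ℝ => ‖g₁ (t, k) *
        Complex.exp (Complex.I * t * ((‖k‖ ^ 2 - ω : ℝ) : ℂ))‖)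
        = fun t : ℝ => ‖g₁ (t, k)‖ := by
      funext t; rw [norm_mul, norm_exp_I_mul, mul_one]
    rw [heqn]
    exact integral_norm_slice_le (hslicecont g₁ k) (fun t => hC1 t k) hC₁0 (hD0 k)
  -- second J bound (decaying)
  have hJle2 : ∀ (ω : ℝ), ω < 0 → ∀ k,
      ‖J ω k‖ ≤ (‖g₁ (0, k)‖ + C₂ * ((1 + ‖k‖) ^ (d + 1))⁻¹ * T) / (‖k‖ ^ 2 - ω) := by
    intro ω hω k
    have hident : J ω k = (Complex.I * g₁ (0, k) + Complex.I * ∫ t in Ioi (0:ℝ),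
        g₂ (t, k) * Complex.exp (Complex.I * t * ((‖k‖ ^ 2 - ω : ℝ) : ℂ)))
          / ((‖k‖ ^ 2 - ω : ℝ) : ℂ) :=
      ibp _ _ _ (hb ω hω k) (fun t => slice_hasDerivAt d g₁ k t)
        (hint1 k) (hint2 k) (htend1 k)
    rw [hident, norm_div]
    have hdnorm : ‖((‖k‖ ^ 2 - ω : ℝ) : ℂ)‖ = ‖k‖ ^ 2 - ω := by
      rw [Complex.norm_real, Real.norm_eq_abs, abs_of_pos (hb ω hω k)]
    rw [hdnorm]
    gcongr
    · exact (hb ω hω k).le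
    refine le_trans (norm_add_le _ _) ?_
    have h1 : ‖Complex.I * g₁ (0, k)‖ = ‖g₁ (0, k)‖ := by
      rw [norm_mul, Complex.norm_I, one_mul]
    have h2 : ‖Complex.I * ∫ t in Ioi (0:ℝ),
        g₂ (t, k) * Complex.exp (Complex.I * t * ((‖k‖ ^ 2 - ω : ℝ) : ℂ))‖
        ≤ C₂ * ((1 + ‖k‖) ^ (d + 1))⁻¹ * T := by
      rw [norm_mul, Complex.norm_I, one_mul]
      refine le_trans (norm_integral_le_integral_norm _) ?_
      have heqn : (fun t : ℝ => ‖g₂ (t, k) *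
          Complex.exp (Complex.I * t * ((‖k‖ ^ 2 - ω : ℝ) : ℂ))‖)
          = fun t : ℝ => ‖g₂ (t, k)‖ := by
        funext t; rw [norm_mul, norm_exp_I_mul, mul_one]
      rw [heqn]
      exact integral_norm_slice_le (hslicecont g₂ k) (fun t => hC2 t k) hC₂0 (hD0 k)
    rw [h1]
    exact add_le_add le_rfl h2
  -- Fubini swap
  have hswap : ∀ ω : ℝ,
      (∫ t in Ici (0:ℝ), ∫ k : EuclideanSpace ℝ (Fin d),
        g (t, k) * Complex.exp (Complex.I * t * ((‖k‖ ^ 2 - ω : ℝ) : ℂ)))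
      = ∫ k : EuclideanSpace ℝ (Fin d), ∫ t in Ici (0:ℝ),
        g (t, k) * Complex.exp (Complex.I * t * ((‖k‖ ^ 2 - ω : ℝ) : ℂ)) := by
    intro ω
    apply integral_integral_swap
    haveI : (volume : Measure (ℝ × EuclideanSpace ℝ (Fin d))).IsAddHaarMeasure := by
      rw [Measure.volume_eq_prod]; infer_instance
    have hfull : Integrable (fun p : ℝ × EuclideanSpace ℝ (Fin d) =>
        g p * Complex.exp (Complex.I * p.1 * ((‖p.2‖ ^ 2 - ω : ℝ) : ℂ))) volume := by
      apply g.integrable.norm.mono'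
      · exact (g.continuous.mul
          (Complex.continuous_exp.comp (by fun_prop))).aestronglyMeasurable
      · filter_upwards with p
        rw [norm_mul, norm_exp_I_mul, mul_one]
    rw [Measure.volume_eq_prod] at hfull
    have hres := hfull.restrict
      (s := (Ici (0:ℝ)) ×ˢ (univ : Set (EuclideanSpace ℝ (Fin d))))
    rw [← Measure.prod_restrict, Measure.restrict_univ] at hres
    exact hres
  -- the rewritten integrand
  set Gf : ℝ → EuclideanSpace ℝ (Fin d) → ℂ := fun ω k =>
    ((ω / (‖k‖ ^ 2 - ω) : ℝ) : ℂ) * (Complex.I * g (0, k) + Complex.I * J ω k) with hGfdef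
  have heqev : ∀ᶠ ω in atBot, (∫ k, Gf ω k)
      = (ω : ℂ) * ∫ t in Ici (0:ℝ), ∫ k : EuclideanSpace ℝ (Fin d),
          g (t, k) * Complex.exp (Complex.I * t * ((‖k‖ ^ 2 - ω : ℝ) : ℂ)) := by
    filter_upwards [eventually_lt_atBot (0:ℝ)] with ω hω
    rw [hswap ω, ← integral_const_mul]
    apply integral_congr_ae
    apply Eventually.of_forall
    intro k
    show Gf ω k = (ω:ℂ) * ∫ t in Ici (0:ℝ),
      g (t, k) * Complex.exp (Complex.I * t * ((‖k‖ ^ 2 - ω : ℝ) : ℂ))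
    rw [hinner ω hω k]
    have hne : ((‖k‖ ^ 2 - ω : ℝ) : ℂ) ≠ 0 := by
      exact_mod_cast (hb ω hω k).ne'
    rw [hGfdef]
    simp only
    rw [Complex.ofReal_div]
    field_simp
  -- dominated convergence
  have hDCT : Tendsto (fun ω => ∫ k, Gf ω k) atBot
      (nhds (∫ k : EuclideanSpace ℝ (Fin d), -Complex.I * g (0, k))) := by
    apply tendsto_integral_filter_of_dominated_convergence
      (bound := fun k : EuclideanSpace ℝ (Fin d) =>
        (C₀ + C₁ * T) * ((1 + ‖k‖) ^ (d + 1))⁻¹)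
    · -- measurability
      filter_upwards [eventually_lt_atBot (0:ℝ)] with ω hω
      have hcont1 : Continuous fun k : EuclideanSpace ℝ (Fin d) =>
          ((ω / (‖k‖ ^ 2 - ω) : ℝ) : ℂ) :=
        Complex.continuous_ofReal.comp
          (continuous_const.div (by fun_prop) (fun k => (hb ω hω k).ne'))
      have hg0cont : Continuous fun k : EuclideanSpace ℝ (Fin d) => g (0, k) :=
        g.continuous.comp (by fun_prop)
      have hJsm : StronglyMeasurable (J ω) := by
        have hc : Continuous (fun q : (EuclideanSpace ℝ (Fin d)) × ℝ =>
            g₁ (q.2, q.1) * Complex.exp (Complex.I * q.2 * ((‖q.1‖ ^ 2 - ω : ℝ) : ℂ))) := by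
          apply Continuous.mul
          · exact g₁.continuous.comp (by fun_prop)
          · exact Complex.continuous_exp.comp (by fun_prop)
        exact hc.stronglyMeasurable.integral_prod_right'
      exact hcont1.aestronglyMeasurable.mul
        (((hg0cont.aestronglyMeasurable).const_mul Complex.I).add
          ((hJsm.aestronglyMeasurable).const_mul Complex.I))
    · -- bound
      filter_upwards [eventually_lt_atBot (0:ℝ)] with ω hω
      apply Eventually.of_forall
      intro k
      have hbk := hb ω hω k
      have hfac : ‖((ω / (‖k‖ ^ 2 - ω) : ℝ) : ℂ)‖ ≤ 1 := by
        rw [Complex.norm_real, Real.norm_eq_abs, abs_div, abs_of_neg hω,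
          abs_of_pos hbk, div_le_one hbk]
        nlinarith [sq_nonneg ‖k‖]
      have hg0 : ‖g (0, k)‖ ≤ C₀ * ((1 + ‖k‖) ^ (d + 1))⁻¹ := by
        have := hC0 0 k
        simpa using this
      calc ‖Gf ω k‖ = ‖((ω / (‖k‖ ^ 2 - ω) : ℝ) : ℂ)‖ *
            ‖Complex.I * g (0, k) + Complex.I * J ω k‖ := norm_mul _ _
        _ ≤ 1 * (‖g (0, k)‖ + ‖J ω k‖) := by
            apply mul_le_mul hfac ?_ (norm_nonneg _) zero_le_one
            refine le_trans (norm_add_le _ _) ?_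
            rw [norm_mul, norm_mul, Complex.norm_I, one_mul, one_mul]
        _ ≤ 1 * (C₀ * ((1 + ‖k‖) ^ (d + 1))⁻¹ +
            C₁ * ((1 + ‖k‖) ^ (d + 1))⁻¹ * T) :=
            mul_le_mul_of_nonneg_left (add_le_add hg0 (hJle ω k)) zero_le_one
        _ = (C₀ + C₁ * T) * ((1 + ‖k‖) ^ (d + 1))⁻¹ := by ring
    · exact (integrable_inv_pow d).const_mul _
    · -- pointwise limit
      apply Eventually.of_forall
      intro k
      have ha : Tendsto (fun ω : ℝ => ‖k‖ ^ 2 - ω) atBot atTop := by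
        have hneg : Tendsto (fun ω : ℝ => -ω) atBot atTop := tendsto_neg_atBot_atTop
        have := tendsto_atTop_add_const_left atBot (‖k‖ ^ 2) hneg
        simpa [sub_eq_add_neg] using this
      have factor1r : Tendsto (fun ω : ℝ => ω / (‖k‖ ^ 2 - ω)) atBot (nhds (-1)) := by
        have h2 : Tendsto (fun ω : ℝ => ‖k‖ ^ 2 / (‖k‖ ^ 2 - ω)) atBot (nhds 0) :=
          Tendsto.div_atTop tendsto_const_nhds ha
        have h3 : Tendsto (fun ω : ℝ => -1 + ‖k‖ ^ 2 / (‖k‖ ^ 2 - ω)) atBot (nhds (-1)) := by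
          simpa using (tendsto_const_nhds (x := (-1:ℝ))).add h2
        apply h3.congr'
        filter_upwards [eventually_lt_atBot (0:ℝ)] with ω hω
        have hbk := (hb ω hω k).ne'
        field_simp
        ring
      have factor1 : Tendsto (fun ω : ℝ => ((ω / (‖k‖ ^ 2 - ω) : ℝ) : ℂ))
          atBot (nhds (-1)) := by
        have h := (Complex.continuous_ofReal.tendsto (-1)).comp factor1r
        simp only [Function.comp_def] at h
        convert h using 1
        simp
      have factor2 : Tendsto (fun ω : ℝ => J ω k) atBot (nhds 0) := by
        rw [tendsto_zero_iff_norm_tendsto_zero]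
        apply squeeze_zero' (Eventually.of_forall fun ω => norm_nonneg _)
        · filter_upwards [eventually_lt_atBot (0:ℝ)] with ω hω
          exact hJle2 ω hω k
        · exact Tendsto.div_atTop tendsto_const_nhds ha
      have hfin := factor1.mul
        ((tendsto_const_nhds (x := Complex.I * g (0, k))).add (factor2.const_mul Complex.I))
      have hval : (-1 : ℂ) * (Complex.I * g (0, k) + Complex.I * 0)
          = -Complex.I * g (0, k) := by ring
      rw [hval] at hfin
      exact hfin
  have hIvalue : (∫ k : EuclideanSpace ℝ (Fin d), -Complex.I * g (0, k))
      = -Complex.I * ∫ k : EuclideanSpace ℝ (Fin d), g (0, k) := integral_const_mul _ _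
  rw [hIvalue] at hDCT
  have part1 := hDCT.congr' heqev
  refine ⟨part1, fun hne hcon => ?_⟩
  have h0 := tendsto_nhds_unique hcon part1
  rcases mul_eq_zero.mp h0.symm with h | h
  · exact Complex.I_ne_zero (neg_eq_zero.mp h)
  · exact hne h
end
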